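/- The Shrikhande graph S is not isomorphic to the 4×4 rook's graph R: there is no graph isomorphism between the simple graph on (ZMod 4) × (ZMod 4) with u ~ v iff u − v ∈ {(1,0), (3,0), (0,1), (0,3), (1,1), (3,3)} and the simple graph on Fin 4 × Fin 4 with (a,b) ~ (c,d) iff (a,b) ≠ (c,d) and (a = c or b = d), even though both are strongly regular with the same parameters (16, 6, 2, 2). -/

import Mathlib

open SimpleGraph

/-- The connection set of the Shrikhande graph. -/
def shrikhandeSet : Finset (ZMod 4 × ZMod 4) :=
  {(1, 0), (3, 0), (0, 1), (0, 3), (1, 1), (3, 3)}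

private lemma shrikhande_symm : ∀ u v : ZMod 4 × ZMod 4,
    u - v ∈ shrikhandeSet → v - u ∈ shrikhandeSet := by decide

private lemma shrikhande_irrefl : ∀ u : ZMod 4 × ZMod 4, u - u ∉ shrikhandeSet := by decide

/-- The Shrikhande graph: vertices are `(ZMod 4) × (ZMod 4)` and `u` is adjacent to `v`
iff `u - v ∈ {(1,0), (3,0), (0,1), (0,3), (1,1), (3,3)}`. -/
def shrikhandeGraph : SimpleGraph (ZMod 4 × ZMod 4) where
  Adj u v := u - v ∈ shrikhandeSet
  symm := ⟨fun u v h => shrikhande_symm u v h⟩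
  loopless := ⟨fun u h => shrikhande_irrefl u h⟩

/-- The 4×4 rook's graph: vertices are `Fin 4 × Fin 4` and `(a,b)` is adjacent to `(c,d)`
iff `(a,b) ≠ (c,d)` and (`a = c` or `b = d`). -/
def rookGraph : SimpleGraph (Fin 4 × Fin 4) where
  Adj x y := x ≠ y ∧ (x.1 = y.1 ∨ x.2 = y.2)
  symm := ⟨fun _ _ ⟨h1, h2⟩ => ⟨h1.symm, h2.imp Eq.symm Eq.symm⟩⟩
  loopless := ⟨fun _ h => h.1 rfl⟩

instance : DecidableRel shrikhandeGraph.Adj := fun u v =>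
  inferInstanceAs (Decidable (u - v ∈ shrikhandeSet))

instance : DecidableRel rookGraph.Adj := fun x y =>
  inferInstanceAs (Decidable (x ≠ y ∧ (x.1 = y.1 ∨ x.2 = y.2)))
lemma srgS : shrikhandeGraph.IsSRGWith 16 6 2 2 := by
  refine ⟨by decide, ?_, ?_, ?_⟩
  · show ∀ v, shrikhandeGraph.degree v = 6; decide
  · show ∀ v w, shrikhandeGraph.Adj v w → Fintype.card (shrikhandeGraph.commonNeighbors v w) = 2
    decide
  · intro v w hne
    revert hne
    show v ≠ w → ¬shrikhandeGraph.Adj v w → Fintype.card (shrikhandeGraph.commonNeighbors v w) = 2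
    revert v w
    decide

lemma srgR : rookGraph.IsSRGWith 16 6 2 2 := by
  refine ⟨by decide, ?_, ?_, ?_⟩
  · show ∀ v, rookGraph.degree v = 6; decide
  · show ∀ v w, rookGraph.Adj v w → Fintype.card (rookGraph.commonNeighbors v w) = 2
    decide
  · intro v w hne
    revert hne
    show v ≠ w → ¬rookGraph.Adj v w → Fintype.card (rookGraph.commonNeighbors v w) = 2
    revert v w
    decide

set_option maxHeartbeats 4000000 in
lemma noK4 : ∀ a b c d : ZMod 4 × ZMod 4, shrikhandeGraph.Adj a b → shrikhandeGraph.Adj a c →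
    shrikhandeGraph.Adj a d → shrikhandeGraph.Adj b c → shrikhandeGraph.Adj b d →
    shrikhandeGraph.Adj c d → False := by decide

lemma noIso : IsEmpty (shrikhandeGraph ≃g rookGraph) := by
  constructor
  intro f
  have h : ∀ x y : Fin 4 × Fin 4, rookGraph.Adj x y → shrikhandeGraph.Adj (f.symm x) (f.symm y) :=
    fun x y h => f.symm.map_adj_iff.mpr h
  exact noK4 (f.symm (0,0)) (f.symm (0,1)) (f.symm (0,2)) (f.symm (0,3))
    (h _ _ (by decide)) (h _ _ (by decide)) (h _ _ (by decide))
    (h _ _ (by decide)) (h _ _ (by decide)) (h _ _ (by decide))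

theorem stmt9 :
    shrikhandeGraph.IsSRGWith 16 6 2 2 ∧ rookGraph.IsSRGWith 16 6 2 2 ∧
      IsEmpty (shrikhandeGraph ≃g rookGraph) := by
  exact ⟨srgS, srgR, noIso⟩
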